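/- arXiv:2312.00620 — 2 statements merged into one kernel-verified Lean document; each statement's English description precedes it below -/
import Mathlib

section
/- Let G be a connected graph on k vertices with no Hamiltonian path but containing a path P = (v_1, ..., v_{k-1}), and let u be the vertex not on P with neighbors on P exactly {v_{i_1}, ..., v_{i_s}}, i_1 < i_2 < ... < i_s. Then there is no edge of G of any of the following forms: v_{i_j+1}v_{i_r+1} or v_{i_j-1}v_{i_r-1} for 1 ≤ j < r ≤ s, and v_1 v_{i_t+1} or v_{i_t-1} v_{k-1} for 1 ≤ t ≤ s. -/
open SimpleGraph

/-- `H` has a copy in `G`, i.e. `G` contains `H` as a (not necessarily induced) subgraph. -/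
def CopyIn {α β : Type*} (H : SimpleGraph α) (G : SimpleGraph β) : Prop :=
  ∃ f : α ↪ β, ∀ a b, H.Adj a b → G.Adj (f a) (f b)

/-- The join `G ∨ H` of two graphs: disjoint union plus all edges in between. -/
def graphJoin {α β : Type*} (G : SimpleGraph α) (H : SimpleGraph β) : SimpleGraph (α ⊕ β) where
  Adj x y := (∃ a b, x = Sum.inl a ∧ y = Sum.inl b ∧ G.Adj a b) ∨
    (∃ a b, x = Sum.inr a ∧ y = Sum.inr b ∧ H.Adj a b) ∨
    (x.isLeft ∧ y.isRight) ∨ (x.isRight ∧ y.isLeft)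
  symm := by
    refine ⟨?_⟩
    rintro x y (⟨a, b, rfl, rfl, h⟩ | ⟨a, b, rfl, rfl, h⟩ | ⟨h1, h2⟩ | ⟨h1, h2⟩)
    · exact Or.inl ⟨b, a, rfl, rfl, h.symm⟩
    · exact Or.inr (Or.inl ⟨b, a, rfl, rfl, h.symm⟩)
    · exact Or.inr (Or.inr (Or.inr ⟨h2, h1⟩))
    · exact Or.inr (Or.inr (Or.inl ⟨h2, h1⟩))
  loopless := by
    refine ⟨?_⟩
    rintro x (⟨a, b, rfl, heq, h⟩ | ⟨a, b, rfl, heq, h⟩ | ⟨h1, h2⟩ | ⟨h1, h2⟩)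
    · cases heq; exact G.loopless.irrefl _ h
    · cases heq; exact H.loopless.irrefl _ h
    · cases x <;> simp_all
    · cases x <;> simp_all

/-- A matching with `t` edges. -/
def matchingGraph (t : ℕ) : SimpleGraph (Fin t × Fin 2) :=
  SimpleGraph.fromRel (fun p q => p.1 = q.1)

/-- The star with `t` edges. -/
def starGraph (t : ℕ) : SimpleGraph (Fin 1 ⊕ Fin t) := completeBipartiteGraph (Fin 1) (Fin t)

/-- Turán number of a single forbidden graph. -/
noncomputable def exNum1 {α : Type*} (n : ℕ) (A : SimpleGraph α) : ℕ :=
  sSup {e | ∃ G : SimpleGraph (Fin n), ¬ CopyIn A G ∧ e = G.edgeSet.ncard}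

/-- Turán number of two forbidden graphs. -/
noncomputable def exNum2 {α β : Type*} (n : ℕ) (A : SimpleGraph α) (B : SimpleGraph β) : ℕ :=
  sSup {e | ∃ G : SimpleGraph (Fin n),
    ¬ CopyIn A G ∧ ¬ CopyIn B G ∧ e = G.edgeSet.ncard}

/-- Connected Turán number of two forbidden graphs. -/
noncomputable def exConn2 {α β : Type*} (n : ℕ) (A : SimpleGraph α) (B : SimpleGraph β) : ℕ :=
  sSup {e | ∃ G : SimpleGraph (Fin n),
    G.Connected ∧ ¬ CopyIn A G ∧ ¬ CopyIn B G ∧ e = G.edgeSet.ncard}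

/-- Turán number of a family of forbidden graphs. -/
noncomputable def exNumFam (n : ℕ) (F : Set (Σ V : Type, SimpleGraph V)) : ℕ :=
  sSup {e | ∃ G : SimpleGraph (Fin n),
    (∀ M ∈ F, ¬ CopyIn M.2 G) ∧ e = G.edgeSet.ncard}

/-- The family of graphs obtained from `H` by deleting one color class of a proper coloring
of `H` with `χ(H)` colors. -/
def delClassFam {W : Type} (H : SimpleGraph W) : Set (Σ V : Type, SimpleGraph V) :=
  {M | ∃ (m : ℕ) (C : H.Coloring (Fin m)) (c : Fin m),
    H.chromaticNumber = (m : ℕ∞) ∧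
    M = ⟨{v : W | C v ≠ c}, H.induce {v : W | C v ≠ c}⟩}

/-- The family of graphs obtained from `H` by deleting two adjacent vertices. -/
def delPairFam {W : Type} (H : SimpleGraph W) : Set (Σ V : Type, SimpleGraph V) :=
  {M | ∃ u v : W, H.Adj u v ∧
    M = ⟨{x : W | x ≠ u ∧ x ≠ v}, H.induce {x : W | x ≠ u ∧ x ≠ v}⟩}
lemma copy_of_seq {V : Type*} (G : SimpleGraph V) (k : ℕ) (w : ℕ → V)
    (hinjw : ∀ a, a < k → ∀ b, b < k → w a = w b → a = b)
    (hadjw : ∀ t, t + 1 < k → G.Adj (w t) (w (t + 1))) :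
    CopyIn (pathGraph k) G := by
  refine ⟨⟨fun x => w x.val, fun a b h => Fin.ext (hinjw _ a.isLt _ b.isLt h)⟩, ?_⟩
  intro a b hab
  rw [pathGraph_adj] at hab
  rcases hab with h | h
  · have hb := b.isLt
    show G.Adj (w a.val) (w b.val)
    rw [← h]
    exact hadjw a.val (by omega)
  · have ha := a.isLt
    show G.Adj (w a.val) (w b.val)
    rw [← h]
    exact (hadjw b.val (by omega)).symm

lemma lemA {V : Type*} (G : SimpleGraph V) (k : ℕ) (v : ℕ → V) (u : V)
    (hvinj : ∀ a b, 1 ≤ a → a ≤ k - 1 → 1 ≤ b → b ≤ k - 1 → v a = v b → a = b)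
    (hadj : ∀ j, 1 ≤ j → j ≤ k - 2 → G.Adj (v j) (v (j + 1)))
    (hvu : ∀ a, 1 ≤ a → a ≤ k - 1 → v a ≠ u)
    (i r : ℕ) (hk : 2 ≤ k) (hi1 : 1 ≤ i) (hir : i < r) (hr : r + 1 ≤ k - 1)
    (hui : G.Adj u (v i)) (hur : G.Adj u (v r))
    (he : G.Adj (v (i + 1)) (v (r + 1))) : CopyIn (pathGraph k) G := by
  refine copy_of_seq G k
    (fun t => if t < i then v (t + 1) else if t = i then u
      else if t ≤ r then v (r + i + 1 - t) else v t) ?_ ?_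
  · intro a ha b hb h
    split_ifs at h <;>
      first
        | omega
        | (exact absurd h (hvu _ (by omega) (by omega)))
        | (exact absurd h.symm (hvu _ (by omega) (by omega)))
        | (have := hvinj _ _ (by omega) (by omega) (by omega) (by omega) h; omega)
  · intro t ht
    split_ifs <;>
      first
        | (exfalso; first | omega | assumption)
        | (exact hadj (t + 1) (by omega) (by omega))
        | (exact hadj t (by omega) (by omega))
        | (have h2 : i = t + 1 := by omega
           rw [← h2]; exact hui.symm)
        | (have h3 : r + i + 1 - (t + 1) = r := by omega
           rw [h3]; exact hur)
        | (have e : (r + i + 1 - (t + 1)) + 1 = r + i + 1 - t := by omega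
           rw [← e]
           exact (hadj (r + i + 1 - (t + 1)) (by omega) (by omega)).symm)
        | (have h5 : r + i + 1 - t = i + 1 := by omega
           have h6 : t + 1 = r + 1 := by omega
           rw [h5, h6]; exact he)

lemma lemB {V : Type*} (G : SimpleGraph V) (k : ℕ) (v : ℕ → V) (u : V)
    (hvinj : ∀ a b, 1 ≤ a → a ≤ k - 1 → 1 ≤ b → b ≤ k - 1 → v a = v b → a = b)
    (hadj : ∀ j, 1 ≤ j → j ≤ k - 2 → G.Adj (v j) (v (j + 1)))
    (hvu : ∀ a, 1 ≤ a → a ≤ k - 1 → v a ≠ u)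
    (t : ℕ) (hk : 2 ≤ k) (ht1 : 1 ≤ t) (ht : t + 1 ≤ k - 1)
    (hut : G.Adj u (v t))
    (he : G.Adj (v 1) (v (t + 1))) : CopyIn (pathGraph k) G := by
  refine copy_of_seq G k
    (fun j => if j = 0 then u else if j ≤ t then v (t + 1 - j) else v j) ?_ ?_
  · intro a ha b hb h
    split_ifs at h <;>
      first
        | omega
        | (exact absurd h (hvu _ (by omega) (by omega)))
        | (exact absurd h.symm (hvu _ (by omega) (by omega)))
        | (have := hvinj _ _ (by omega) (by omega) (by omega) (by omega) h; omega)
  · intro j hj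
    split_ifs <;>
      first
        | (exfalso; first | omega | assumption)
        | (have h2 : t + 1 - (j + 1) = t := by omega
           rw [h2]; exact hut)
        | (exact hadj j (by omega) (by omega))
        | (have e : (t + 1 - (j + 1)) + 1 = t + 1 - j := by omega
           rw [← e]
           exact (hadj (t + 1 - (j + 1)) (by omega) (by omega)).symm)
        | (have h5 : t + 1 - j = 1 := by omega
           have h6 : j + 1 = t + 1 := by omega
           rw [h5, h6]; exact he)

theorem lemma_no_ham_path_forbidden_edges {V : Type*} [Fintype V] (G : SimpleGraph V)
    (k : ℕ) (hcard : Fintype.card V = k) (hconn : G.Connected)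
    (hnoHam : ¬ CopyIn (pathGraph k) G)
    (v : ℕ → V)
    (hinj : Set.InjOn v (Set.Icc 1 (k - 1)))
    (hadj : ∀ i, 1 ≤ i → i ≤ k - 2 → G.Adj (v i) (v (i + 1)))
    (u : V) (hu : ∀ i ∈ Set.Icc 1 (k - 1), v i ≠ u)
    (N : Set ℕ) (hN : N ⊆ Set.Icc 1 (k - 1))
    (hNdef : ∀ i ∈ Set.Icc 1 (k - 1), (i ∈ N ↔ G.Adj u (v i))) :
    (∀ i ∈ N, ∀ r ∈ N, i ≠ r → i + 1 ≤ k - 1 → r + 1 ≤ k - 1 →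
        ¬ G.Adj (v (i + 1)) (v (r + 1))) ∧
    (∀ i ∈ N, ∀ r ∈ N, i ≠ r → 2 ≤ i → 2 ≤ r →
        ¬ G.Adj (v (i - 1)) (v (r - 1))) ∧
    (∀ t ∈ N, t + 1 ≤ k - 1 → ¬ G.Adj (v 1) (v (t + 1))) ∧
    (∀ t ∈ N, 2 ≤ t → ¬ G.Adj (v (t - 1)) (v (k - 1))) := by
  have hvinj : ∀ a b, 1 ≤ a → a ≤ k - 1 → 1 ≤ b → b ≤ k - 1 → v a = v b → a = b :=
    fun a b ha1 ha2 hb1 hb2 h =>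
      hinj (Set.mem_Icc.mpr ⟨ha1, ha2⟩) (Set.mem_Icc.mpr ⟨hb1, hb2⟩) h
  have hvu : ∀ a, 1 ≤ a → a ≤ k - 1 → v a ≠ u :=
    fun a h1 h2 => hu a (Set.mem_Icc.mpr ⟨h1, h2⟩)
  have hmem : ∀ i ∈ N, 1 ≤ i ∧ i ≤ k - 1 := fun i hi => Set.mem_Icc.mp (hN hi)
  have hadjN : ∀ i ∈ N, G.Adj u (v i) := fun i hi => (hNdef i (hN hi)).mp hi
  -- reversed sequence
  set v' : ℕ → V := fun j => v (k - j) with hv'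
  have hvinj' : ∀ a b, 1 ≤ a → a ≤ k - 1 → 1 ≤ b → b ≤ k - 1 → v' a = v' b → a = b := by
    intro a b ha1 ha2 hb1 hb2 h
    have := hvinj (k - a) (k - b) (by omega) (by omega) (by omega) (by omega) h
    omega
  have hadj' : ∀ j, 1 ≤ j → j ≤ k - 2 → G.Adj (v' j) (v' (j + 1)) := by
    intro j h1 h2
    have e : (k - (j + 1)) + 1 = k - j := by omega
    simp only [hv']
    rw [← e]
    exact (hadj (k - (j + 1)) (by omega) (by omega)).symm
  have hvu' : ∀ a, 1 ≤ a → a ≤ k - 1 → v' a ≠ u := by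
    intro a h1 h2
    exact hvu (k - a) (by omega) (by omega)
  have hv'eq : ∀ a, a ≤ k → v' (k - a) = v a := by
    intro a ha
    simp only [hv']
    congr 1
    omega
  refine ⟨?_, ?_, ?_, ?_⟩
  · intro i hi r hr hne hik hrk hAdj
    obtain ⟨hi1, hi2⟩ := hmem i hi
    obtain ⟨hr1, hr2⟩ := hmem r hr
    have hk2 : 2 ≤ k := by omega
    rcases hne.lt_or_gt with h | h
    · exact hnoHam (lemA G k v u hvinj hadj hvu i r hk2 hi1 h (by omega)
        (hadjN i hi) (hadjN r hr) hAdj)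
    · exact hnoHam (lemA G k v u hvinj hadj hvu r i hk2 hr1 h (by omega)
        (hadjN r hr) (hadjN i hi) hAdj.symm)
  · intro i hi r hr hne hik hrk hAdj
    obtain ⟨hi1, hi2⟩ := hmem i hi
    obtain ⟨hr1, hr2⟩ := hmem r hr
    have hk2 : 2 ≤ k := by omega
    have hui' : G.Adj u (v' (k - i)) := (hv'eq i (by omega)) ▸ hadjN i hi
    have hur' : G.Adj u (v' (k - r)) := (hv'eq r (by omega)) ▸ hadjN r hr
    have ei : v' (k - i + 1) = v (i - 1) := by
      simp only [hv']; congr 1; omega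
    have er : v' (k - r + 1) = v (r - 1) := by
      simp only [hv']; congr 1; omega
    rcases hne.lt_or_gt with h | h
    · refine hnoHam (lemA G k v' u hvinj' hadj' hvu' (k - r) (k - i) hk2
        (by omega) (by omega) (by omega) hur' hui' ?_)
      rw [er, ei]; exact hAdj.symm
    · refine hnoHam (lemA G k v' u hvinj' hadj' hvu' (k - i) (k - r) hk2
        (by omega) (by omega) (by omega) hui' hur' ?_)
      rw [er, ei]; exact hAdj
  · intro t ht htk hAdj
    obtain ⟨ht1, ht2⟩ := hmem t ht
    have hk2 : 2 ≤ k := by omega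
    exact hnoHam (lemB G k v u hvinj hadj hvu t hk2 ht1 (by omega) (hadjN t ht) hAdj)
  · intro t ht ht2' hAdj
    obtain ⟨ht1, ht2⟩ := hmem t ht
    have hk2 : 2 ≤ k := by omega
    have hut' : G.Adj u (v' (k - t)) := (hv'eq t (by omega)) ▸ hadjN t ht
    have et : v' (k - t + 1) = v (t - 1) := by
      simp only [hv']; congr 1; omega
    have e1 : v' 1 = v (k - 1) := by simp only [hv']
    refine hnoHam (lemB G k v' u hvinj' hadj' hvu' (k - t) hk2
      (by omega) (by omega) hut' ?_)
    rw [e1, et]; exact hAdj.symm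
end

section
/- Let t ≥ 1 and n ≥ 2t. If t is odd, the maximum number of edges in an n-vertex graph containing neither a matching of t edges nor a star with t edges is t² - t, attained by the disjoint union of two copies of K_t (plus isolated vertices). -/
open SimpleGraph

namespace AHS
variable {V : Type*} [Fintype V] [DecidableEq V]

/-- A matching as an involution: `f v = v` means unmatched, otherwise `v` is matched to `f v`. -/
def IsMF (G : SimpleGraph V) (f : V → V) : Prop :=
  Function.Involutive f ∧ ∀ v, f v ≠ v → G.Adj v (f v)

def msupp (f : V → V) : Finset V := Finset.univ.filter (fun v => f v ≠ v)

lemma mem_msupp {f : V → V} {v : V} : v ∈ msupp f ↔ f v ≠ v := by simp [msupp]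

lemma msupp_even {G : SimpleGraph V} {f : V → V} (hf : IsMF G f) : Even (msupp f).card := by
  classical
  have key : ∀ s : Finset V, (∀ x ∈ s, f x ≠ x ∧ f x ∈ s) → Even s.card := by
    intro s
    induction s using Finset.strongInduction with
    | _ s ih =>
      intro hs
      rcases s.eq_empty_or_nonempty with rfl | ⟨x, hx⟩
      · simp
      · have hfx : f x ≠ x ∧ f x ∈ s := hs x hx
        have hsub : (s.erase x).erase (f x) ⊂ s :=
          (Finset.erase_subset _ _).trans_ssubset (Finset.erase_ssubset hx)
        have he : Even ((s.erase x).erase (f x)).card := by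
          refine ih _ hsub fun y hy => ?_
          have hy1 : y ≠ f x := Finset.ne_of_mem_erase hy
          have hy2 : y ≠ x := Finset.ne_of_mem_erase (Finset.mem_of_mem_erase hy)
          have hys : y ∈ s := Finset.mem_of_mem_erase (Finset.mem_of_mem_erase hy)
          refine ⟨(hs y hys).1, ?_⟩
          refine Finset.mem_erase.2 ⟨?_, Finset.mem_erase.2 ⟨?_, (hs y hys).2⟩⟩
          · intro h; exact hy2 (hf.1.injective h)
          · intro h; exact hy1 (by rw [← h, hf.1])
        have hcard : s.card = ((s.erase x).erase (f x)).card + 2 := by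
          rw [Finset.card_erase_of_mem, Finset.card_erase_of_mem hx]
          · have : 1 ≤ s.card := Finset.card_pos.2 ⟨x, hx⟩
            have h2 : f x ∈ s.erase x := Finset.mem_erase.2 ⟨hfx.1, hfx.2⟩
            have : 2 ≤ s.card := by
              have := Finset.one_lt_card.2 ⟨x, hx, f x, hfx.2, fun h => hfx.1 h.symm⟩
              omega
            omega
          · exact Finset.mem_erase.2 ⟨hfx.1, hfx.2⟩
        rw [hcard]
        exact he.add (by decide)
  refine key _ fun x hx => ?_
  rw [mem_msupp] at hx
  refine ⟨hx, mem_msupp.2 ?_⟩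
  rw [hf.1 x]
  exact fun h => hx (by conv_lhs => rw [h, hf.1])

/-- the set of achievable matching support sizes -/
def MS (G : SimpleGraph V) : Set ℕ := {n | ∃ f, IsMF G f ∧ (msupp f).card = n}

lemma MS_nonempty (G : SimpleGraph V) : (MS G).Nonempty :=
  ⟨0, id, ⟨fun _ => rfl, fun v h => absurd rfl h⟩, by simp [msupp]⟩

lemma MS_bdd (G : SimpleGraph V) : BddAbove (MS G) :=
  ⟨Fintype.card V, fun n ⟨f, _, hc⟩ => hc ▸ Finset.card_filter_le _ _⟩

/-- maximum matching support size (twice the matching number) -/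
noncomputable def nu2 (G : SimpleGraph V) : ℕ := sSup (MS G)

lemma exists_max (G : SimpleGraph V) : ∃ f, IsMF G f ∧ (msupp f).card = nu2 G :=
  Nat.sSup_mem (MS_nonempty G) (MS_bdd G)

lemma le_nu2 {G : SimpleGraph V} {f : V → V} (hf : IsMF G f) : (msupp f).card ≤ nu2 G :=
  le_csSup (MS_bdd G) ⟨f, hf, rfl⟩

lemma nu2_even (G : SimpleGraph V) : Even (nu2 G) := by
  obtain ⟨f, hf, hc⟩ := exists_max G
  exact hc ▸ msupp_even hf

/-- augmenting by a single edge between two unmatched vertices -/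
lemma augment {G : SimpleGraph V} {f : V → V} (hf : IsMF G f)
    (hmax : (msupp f).card = nu2 G) {u v : V}
    (hu : f u = u) (hv : f v = v) (huv : u ≠ v) (hadj : G.Adj u v) : False := by
  set g : V → V := fun x => if x = u then v else if x = v then u else f x with hg
  have hgu : g u = v := by simp [hg]
  have hgv : g v = u := by simp [hg, huv.symm]
  have hgo : ∀ x, x ≠ u → x ≠ v → g x = f x := by
    intro x h1 h2; simp [hg, h1, h2]
  have hinv : Function.Involutive g := by
    intro x
    rcases eq_or_ne x u with rfl | h1
    · rw [hgu, hgv]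
    rcases eq_or_ne x v with rfl | h2
    · rw [hgv, hgu]
    · rw [hgo x h1 h2, hgo (f x) (fun h => h1 (by rw [← hf.1 x, h, hu])) 
        (fun h => h2 (by rw [← hf.1 x, h, hv])), hf.1]
  have hmf : IsMF G g := by
    refine ⟨hinv, fun x hx => ?_⟩
    rcases eq_or_ne x u with rfl | h1
    · rwa [hgu]
    rcases eq_or_ne x v with rfl | h2
    · rw [hgv]; exact hadj.symm
    · rw [hgo x h1 h2] at hx ⊢; exact hf.2 x hx
  have hsupp : msupp g = insert u (insert v (msupp f)) := by
    ext x
    simp only [mem_msupp, Finset.mem_insert]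
    rcases eq_or_ne x u with rfl | h1
    · simp [hgu, huv.symm]
    rcases eq_or_ne x v with rfl | h2
    · simp [hgv, huv]
    · simp [hgo x h1 h2, h1, h2]
  have hcard : (msupp g).card = (msupp f).card + 2 := by
    rw [hsupp, Finset.card_insert_of_notMem, Finset.card_insert_of_notMem]
    · simp [mem_msupp, hv]
    · simp [mem_msupp, hu, huv]
  have h1 := le_nu2 hmf
  omega



section Walk

/-- the alternating walk: start at `u`, follow `g`, then `f`, then `g`, ... -/
def wp (f g : V → V) (u : V) : ℕ → V
  | 0 => u
  | (i+1) => (if Even i then g else f) (wp f g u i)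

variable {f g : V → V} {u : V}

lemma wp_zero (f g : V → V) (u : V) : wp f g u 0 = u := rfl

lemma wp_succ (f g : V → V) (u : V) (i : ℕ) :
    wp f g u (i+1) = (if Even i then g else f) (wp f g u i) := rfl

lemma wp_arr (hf : Function.Involutive f) (hg : Function.Involutive g) (s : ℕ) :
    (if Even s then g else f) (wp f g u (s+1)) = wp f g u s := by
  rw [wp_succ]
  by_cases h : Even s <;> simp only [h, if_true, if_false] <;> [exact hg _; exact hf _]

lemma wp_inj (hf : Function.Involutive f) (hg : Function.Involutive g)
    (hfu : f u = u) :
    ∀ j, (∀ s, s < j → wp f g u (s+1) ≠ wp f g u s) → ∀ i, i < j → wp f g u i ≠ wp f g u j := by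
  intro j
  induction j using Nat.strong_induction_on with
  | _ j ih =>
    intro hns i hij heq
    obtain ⟨j', rfl⟩ : ∃ j', j = j' + 1 := ⟨j - 1, by omega⟩
    have h1 : (if Even j' then g else f) (wp f g u (j'+1)) = wp f g u j' := wp_arr hf hg j'
    rcases Nat.eq_zero_or_pos i with rfl | hi
    · -- i = 0
      rw [← heq] at h1
      have hw0 : wp f g u 0 = u := rfl
      rw [hw0] at h1
      by_cases hev : Even j'
      · rw [if_pos hev] at h1
        have h2 : wp f g u 1 = g u := by rw [wp_succ]; simp [wp_zero]
        rcases Nat.lt_or_ge j' 2 with h | h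
        · interval_cases j'
          · refine hns 0 (by omega) ?_
            show wp f g u 1 = wp f g u 0
            rw [h2]; exact h1
          · exact (by decide : ¬ Even 1) hev
        · refine ih j' (by omega) (fun s hs => hns s (by omega)) 1 (by omega) ?_
          rw [h2]; exact h1
      · rw [if_neg hev, hfu] at h1
        rcases Nat.eq_zero_or_pos j' with rfl | hj
        · exact hev (by decide)
        · refine hns j' (by omega) ?_
          rw [← heq, hw0]; exact h1
    · -- i ≥ 1
      obtain ⟨i', rfl⟩ : ∃ i', i = i' + 1 := ⟨i - 1, by omega⟩
      have h2 : (if Even i' then g else f) (wp f g u (i'+1)) = wp f g u i' := wp_arr hf hg i'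
      by_cases hev : Even j' ↔ Even i'
      · have hite : (if Even j' then g else f) = (if Even i' then g else f) := by
          by_cases hj : Even j' <;> by_cases hi2 : Even i' <;> simp [hj, hi2] <;> tauto
        have hkey : wp f g u j' = wp f g u i' := by
          rw [← h1, ← h2, heq, hite]
        exact ih j' (by omega) (fun s hs => hns s (by omega)) i' (by omega) hkey.symm
      · have hite : (if Even j' then g else f) = (if Even (i'+1) then g else f) := by
          by_cases hj : Even j' <;> by_cases hi2 : Even i' <;>
            simp [hj, hi2, Nat.even_add_one] <;> tauto
        have hkey : wp f g u j' = wp f g u (i'+2) := by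
          rw [← h1, ← heq, hite, ← wp_succ]
        rcases Nat.lt_trichotomy (i'+2) j' with h | h | h
        · exact ih j' (by omega) (fun s hs => hns s (by omega)) (i'+2) (by omega) hkey.symm
        · exact hev (by rw [← h]; simp [Nat.even_add_one])
        · have hj : j' = i' + 1 := by omega
          subst hj
          exact hns (i'+1) (by omega) heq.symm

lemma exists_stall (hf : Function.Involutive f) (hg : Function.Involutive g)
    (hfu : f u = u) : ∃ s, wp f g u (s+1) = wp f g u s := by
  by_contra h
  push_neg at h
  have hinj : Function.Injective (fun i : Fin (Fintype.card V + 1) => wp f g u i) := by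
    intro a b hab
    by_contra hne
    rcases Ne.lt_or_gt (fun hc : (a:ℕ) = b => hne (Fin.ext hc)) with hlt | hlt
    · exact wp_inj hf hg hfu b (fun s _ => h s) a hlt hab
    · exact wp_inj hf hg hfu a (fun s _ => h s) b hlt hab.symm
  have := Fintype.card_le_of_injective _ hinj
  simp at this

end Walk

section Swap

/-- generic swapping of a matching along a path -/
lemma swap_generic {G : SimpleGraph V} {h : V → V} (hh : IsMF G h) (K : ℕ) (p : ℕ → V)
    (hinj : ∀ i j, i ≤ K → j ≤ K → p i = p j → i = j)
    (π : ℕ → ℕ) (hπK : ∀ i, i ≤ K → π i ≤ K) (hππ : ∀ i, i ≤ K → π (π i) = i)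
    (hadj : ∀ i, i ≤ K → π i ≠ i → G.Adj (p i) (p (π i)))
    (hcl : ∀ i, i ≤ K → ∃ j, j ≤ K ∧ h (p i) = p j) :
    ∃ h' : V → V, IsMF G h' ∧ (∀ i, i ≤ K → h' (p i) = p (π i)) ∧
      (∀ x, (∀ i, i ≤ K → x ≠ p i) → h' x = h x) := by
  classical
  set h' : V → V := fun x =>
    if hx : ∃ i, i ≤ K ∧ p i = x then p (π (Nat.find hx)) else h x with hdef
  have hval : ∀ i, i ≤ K → h' (p i) = p (π i) := by
    intro i hi
    have hx : ∃ j, j ≤ K ∧ p j = p i := ⟨i, hi, rfl⟩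
    have hspec := Nat.find_spec hx
    have : Nat.find hx = i := hinj _ _ hspec.1 hi hspec.2
    simp only [hdef, dif_pos hx, this]
  have hoff : ∀ x, (∀ i, i ≤ K → x ≠ p i) → h' x = h x := by
    intro x hx
    have : ¬ ∃ i, i ≤ K ∧ p i = x := by
      rintro ⟨i, hi, rfl⟩; exact hx i hi rfl
    simp only [hdef, dif_neg this]
  have hoffc : ∀ x, (∀ i, i ≤ K → x ≠ p i) → ∀ i, i ≤ K → h x ≠ p i := by
    intro x hx i hi heq
    obtain ⟨j, hj, hj2⟩ := hcl i hi
    exact hx j hj (by rw [← hh.1 x, heq, hj2])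
  have hinv : Function.Involutive h' := by
    intro x
    by_cases hx : ∃ i, i ≤ K ∧ p i = x
    · obtain ⟨i, hi, rfl⟩ := hx
      rw [hval i hi, hval (π i) (hπK i hi), hππ i hi]
    · have hx' : ∀ i, i ≤ K → x ≠ p i := by
        intro i hi heq; exact hx ⟨i, hi, heq.symm⟩
      rw [hoff x hx', hoff (h x) (hoffc x hx'), hh.1]
  refine ⟨h', ⟨hinv, ?_⟩, hval, hoff⟩
  intro x hne
  by_cases hx : ∃ i, i ≤ K ∧ p i = x
  · obtain ⟨i, hi, rfl⟩ := hx
    rw [hval i hi] at hne ⊢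
    exact hadj i hi (fun hc => hne (by rw [hc]))
  · have hx' : ∀ i, i ≤ K → x ≠ p i := by
      intro i hi heq; exact hx ⟨i, hi, heq.symm⟩
    rw [hoff x hx'] at hne ⊢
    exact hh.2 x hne

end Swap

section Gallai
variable {G : SimpleGraph V}

def piA (i : ℕ) : ℕ := if Even i then i + 1 else i - 1
def piB (i : ℕ) : ℕ := if i = 0 then 0 else if Even i then i - 1 else i + 1
def piC (K i : ℕ) : ℕ := if i = K then K else if Even i then i + 1 else i - 1

lemma gallai (G : SimpleGraph V)
    (hav : ∀ w : V, ∃ f, IsMF G f ∧ (msupp f).card = nu2 G ∧ f w = w) :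
    ∀ (D : ℕ) (f : V → V) (u v : V), IsMF G f → (msupp f).card = nu2 G → f u = u → f v = v →
      u ≠ v → G.Reachable u v → G.dist u v ≤ D → False := by
  intro D
  induction D with
  | zero =>
    intro f u v hf hmax hu hv huv hr hD
    exact huv (hr.dist_eq_zero_iff.mp (Nat.le_zero.mp hD))
  | succ D ihD =>
    intro f u v hf hmax hu hv huv hr hD
    obtain ⟨W, hW⟩ := hr.exists_walk_length_eq_dist
    have hdpos : 0 < G.dist u v := hr.pos_dist_of_ne huv
    cases W with
    | nil => rw [← hW] at hdpos; simp at hdpos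
    | @cons _ w _ hadjuw W' =>
      have huw : u ≠ w := hadjuw.ne
      by_cases hwv : w = v
      · exact augment hf hmax hu hv huv (hwv ▸ hadjuw)
      have hrwv : G.Reachable w v := ⟨W'⟩
      have hdwv : G.dist w v ≤ D := by
        have := SimpleGraph.dist_le W'
        simp only [SimpleGraph.Walk.length_cons] at hW
        omega
      obtain ⟨g, hg, hgmax, hgw⟩ := hav w
      have hgu : g u ≠ u := fun h => augment hg hgmax h hgw huw hadjuw
      have hgv : g v ≠ v := fun h => ihD g w v hg hgmax hgw h hwv hrwv hdwv
      -- the alternating walk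
      set p := wp f g u with hpdef
      have hex : ∃ s, p (s+1) = p s := exists_stall hf.1 hg.1 hu
      set K := Nat.find hex with hKdef
      have hK : p (K+1) = p K := Nat.find_spec hex
      have hKmin : ∀ s, s < K → p (s+1) ≠ p s := fun s hs => Nat.find_min hex hs
      have hp0 : p 0 = u := rfl
      have hp1 : p 1 = g u := by rw [hpdef, wp_succ]; simp [wp_zero]
      have hK1 : 1 ≤ K := by
        rcases Nat.eq_zero_or_pos K with h0 | h; swap
        · exact h
        · exfalso; apply hgu; rw [← hp1, ← hp0]
          rw [h0] at hK; exact hK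
      have pinj : ∀ i j, i ≤ K → j ≤ K → p i = p j → i = j := by
        intro i j hi hj hij
        by_contra hne
        rcases Ne.lt_or_gt hne with h | h
        · exact wp_inj hf.1 hg.1 hu j (fun s hs => hKmin s (by omega)) i h hij
        · exact wp_inj hf.1 hg.1 hu i (fun s hs => hKmin s (by omega)) j h hij.symm
      have hstep : ∀ i, p (i+1) = (if Even i then g else f) (p i) := fun i => wp_succ f g u i
      have harr : ∀ i, (if Even i then g else f) (p (i+1)) = p i := wp_arr hf.1 hg.1
      have gstep : ∀ i, Even i → p (i+1) = g (p i) := by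
        intro i he; rw [hstep i, if_pos he]
      have fstep : ∀ i, ¬ Even i → p (i+1) = f (p i) := by
        intro i he; rw [hstep i, if_neg he]
      have garr : ∀ i, Even i → g (p (i+1)) = p i := by
        intro i he; have := harr i; rwa [if_pos he] at this
      have farr : ∀ i, ¬ Even i → f (p (i+1)) = p i := by
        intro i he; have := harr i; rwa [if_neg he] at this
      -- interior vertices are in both supports
      have fsupp : ∀ i, 1 ≤ i → i ≤ K → (Even i ∨ i < K) → f (p i) ≠ p i := by
        intro i h1 h2 hcase
        by_cases he : Even i
        · obtain ⟨i', rfl⟩ : ∃ i', i = i' + 1 := ⟨i - 1, by omega⟩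
          have ho : ¬ Even i' := by
            rw [Nat.even_add_one] at he; exact fun h => he h
          rw [farr i' ho]
          intro hc
          have := pinj i' (i'+1) (by omega) h2 hc
          omega
        · have hiK : i < K := by
            rcases hcase with h | h
            · exact absurd h he
            · exact h
          rw [← fstep i he]
          intro hc
          have := pinj (i+1) i (by omega) (by omega) hc
          omega
      have gsupp : ∀ i, i ≤ K → (¬ Even i ∨ (Even i ∧ 0 < i ∧ i < K)) → g (p i) ≠ p i := by
        intro i h2 hcase
        rcases hcase with ho | ⟨he, h0, hiK⟩
        · obtain ⟨i', rfl⟩ : ∃ i', i = i' + 1 := ⟨i - 1, by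
            rcases Nat.eq_zero_or_pos i with h | h
            · exact absurd (h ▸ Even.zero) ho
            · omega⟩
          have he' : Even i' := by
            rw [Nat.even_add_one] at ho; exact not_not.mp ho
          rw [garr i' he']
          intro hc
          have := pinj i' (i'+1) (by omega) h2 hc
          omega
        · rw [← gstep i he]
          intro hc
          have := pinj (i+1) i (by omega) (by omega) hc
          omega
      -- the stall
      have hstall : (if Even K then g else f) (p K) = p K := by
        have := hstep K
        rw [hK] at this; exact this.symm
      rcases Nat.even_or_odd K with hKev | hKodd
      · -- K even : z := p K is g-unmatched
        have hgz : g (p K) = p K := by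
          have := hstall; rwa [if_pos hKev] at this
        have hK2 : K % 2 = 0 := Nat.even_iff.mp hKev
        by_cases hzw : p K = w
        · -- swap f along the path, then descend with (w, v)
          have hπK : ∀ i, i ≤ K → piC K i ≤ K := by
            intro i hi; unfold piC; split_ifs with h0 he
            · omega
            · omega
            · omega
          have hππ : ∀ i, i ≤ K → piC K (piC K i) = i := by
            intro i hi
            by_cases h0 : i = K
            · unfold piC; rw [if_pos h0, if_pos rfl]; exact h0.symm
            by_cases he : Even i
            · have h1 : piC K i = i + 1 := by unfold piC; rw [if_neg h0, if_pos he]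
              have h2 : i + 1 ≠ K := by have := Nat.even_iff.mp he; omega
              have h3 : ¬ Even (i+1) := by rw [Nat.even_add_one]; exact not_not.2 he
              rw [h1]; unfold piC; rw [if_neg h2, if_neg h3]; omega
            · have hi1 : 1 ≤ i := by
                rcases Nat.eq_zero_or_pos i with h | h
                · exact absurd (h ▸ Even.zero) he
                · omega
              have h1 : piC K i = i - 1 := by unfold piC; rw [if_neg h0, if_neg he]
              have h2 : i - 1 ≠ K := by omega
              have h3 : Even (i - 1) := by
                have := Nat.not_even_iff.mp he
                exact Nat.even_iff.mpr (by omega)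
              rw [h1]; unfold piC; rw [if_neg h2, if_pos h3]
              omega
          have hadjC : ∀ i, i ≤ K → piC K i ≠ i → G.Adj (p i) (p (piC K i)) := by
            intro i hi hne0
            unfold piC; split_ifs with h0 he
            · exfalso; apply hne0; unfold piC; rw [if_pos h0]; exact h0.symm
            · have hiK : i < K := by omega
              have hne : g (p i) ≠ p i := by rw [← gstep i he]; exact hKmin i hiK
              have := hg.2 (p i) hne
              rwa [← gstep i he] at this
            · obtain ⟨i', rfl⟩ : ∃ i', i = i' + 1 :=
                ⟨i - 1, by have := Nat.not_even_iff.mp he; omega⟩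
              simp only [Nat.add_sub_cancel]
              have he' : Even i' := not_not.mp (fun h => he (Nat.even_add_one.mpr h))
              have hi'K : i' < K := by omega
              have hne : g (p i') ≠ p i' := by rw [← gstep i' he']; exact hKmin i' hi'K
              have := (hg.2 (p i') hne).symm
              rwa [← gstep i' he'] at this
          have hclC : ∀ i, i ≤ K → ∃ j, j ≤ K ∧ f (p i) = p j := by
            intro i hi
            rcases Nat.eq_zero_or_pos i with rfl | h1
            · exact ⟨0, by omega, by rw [hp0, hu]⟩
            by_cases he : Even i
            · obtain ⟨i', rfl⟩ : ∃ i', i = i' + 1 := ⟨i - 1, by omega⟩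
              exact ⟨i', by omega, farr i' (Nat.even_add_one.mp he)⟩
            · have hiK : i < K := by have := Nat.not_even_iff.mp he; omega
              exact ⟨i+1, by omega, (fstep i he).symm⟩
          obtain ⟨f', hf', hval, hoff⟩ := swap_generic hf K p pinj (piC K) hπK hππ hadjC hclC
          have hπne : ∀ i, i ≤ K → i ≠ K → piC K i ≠ i := by
            intro i _ h0; unfold piC; split_ifs with h0' he
            · exact absurd h0' h0
            · omega
            · have := Nat.not_even_iff.mp he; omega
          have hfK : f' (p K) = p K := by
            rw [hval K (le_refl _)]; unfold piC; rw [if_pos rfl]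
          have hsupp' : msupp f' = insert u ((msupp f).erase (p K)) := by
            ext x
            by_cases hx : ∃ i, i ≤ K ∧ p i = x
            · obtain ⟨i, hi, rfl⟩ := hx
              rcases eq_or_lt_of_le hi with heq | hiK
              · rw [heq]
                have hKne : p K ≠ u := fun hc => by
                  have := pinj K 0 (le_refl _) (by omega) (by rw [hp0, hc])
                  omega
                simp only [mem_msupp, hfK, ne_eq, not_true_eq_false, false_iff,
                  Finset.mem_insert]
                push_neg
                exact ⟨hKne, Finset.notMem_erase _ _⟩
              · have hmem : p i ∈ msupp f' := mem_msupp.2 (by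
                  rw [hval i hi]
                  intro hc
                  exact hπne i hi (by omega) (pinj _ _ (hπK i hi) hi hc))
                simp only [hmem, true_iff, Finset.mem_insert]
                rcases Nat.eq_zero_or_pos i with rfl | h1
                · left; exact hp0
                · right
                  refine Finset.mem_erase.2 ⟨?_, mem_msupp.2 (fsupp i h1 hi (Or.inr hiK))⟩
                  intro hc
                  have := pinj i K hi (le_refl _) hc
                  omega
            · push_neg at hx
              have hxo : ∀ i, i ≤ K → x ≠ p i := fun i hi h => hx i hi h.symm
              simp only [mem_msupp, Finset.mem_insert, hoff x hxo, Finset.mem_erase]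
              have h1 : x ≠ u := by rw [← hp0]; exact hxo 0 (by omega)
              have h2 : x ≠ p K := hxo K (le_refl _)
              simp [h1, h2]
          have hpKsupp : p K ∈ msupp f :=
            mem_msupp.2 (fsupp K hK1 (le_refl _) (Or.inl hKev))
          have husupp : u ∉ (msupp f).erase (p K) := by
            intro hc
            exact absurd (mem_msupp.1 (Finset.mem_of_mem_erase hc)) (not_not.2 hu)
          have hcard : (msupp f').card = (msupp f).card := by
            rw [hsupp', Finset.card_insert_of_notMem husupp,
              Finset.card_erase_of_mem hpKsupp]
            have : 1 ≤ (msupp f).card := Finset.card_pos.2 ⟨p K, hpKsupp⟩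
            omega
          have hfw : f' w = w := by rw [← hzw]; exact hfK
          have hfv : f' v = v := by
            have hvoff : ∀ i, i ≤ K → v ≠ p i := by
              intro i hi hc
              rcases Nat.eq_zero_or_pos i with rfl | h1
              · exact huv (by rw [hc, hp0])
              rcases eq_or_lt_of_le hi with heq | hiK
              · rw [heq] at hc; exact hwv ((hc.trans hzw).symm)
              · exact fsupp i h1 hi (Or.inr hiK) (by rw [← hc, hv])
            rw [hoff v hvoff]; exact hv
          exact ihD f' w v hf' (by rw [hcard]; exact hmax) hfw hfv hwv hrwv hdwv
        · -- swap g along the path, then augment with the edge (u, w)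
          have hπK : ∀ i, i ≤ K → piB i ≤ K := by
            intro i hi; unfold piB; split_ifs with h0 he
            · omega
            · omega
            · have := Nat.not_even_iff.mp he; omega
          have hππ : ∀ i, i ≤ K → piB (piB i) = i := by
            intro i hi
            by_cases h0 : i = 0
            · rw [h0]; rfl
            by_cases he : Even i
            · have hi2 : 2 ≤ i := by
                have := Nat.even_iff.mp he; omega
              have h1 : piB i = i - 1 := by unfold piB; rw [if_neg h0, if_pos he]
              have h2 : i - 1 ≠ 0 := by omega
              have h3 : ¬ Even (i - 1) := by
                rw [Nat.not_even_iff]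
                have := Nat.even_iff.mp he; omega
              rw [h1]; unfold piB; rw [if_neg h2, if_neg h3]
              omega
            · have h1 : piB i = i + 1 := by unfold piB; rw [if_neg h0, if_neg he]
              have h2 : i + 1 ≠ 0 := by omega
              have h3 : Even (i + 1) := Nat.even_add_one.mpr he
              rw [h1]; unfold piB; rw [if_neg h2, if_pos h3]
              omega
          have hadjB : ∀ i, i ≤ K → piB i ≠ i → G.Adj (p i) (p (piB i)) := by
            intro i hi hne0
            unfold piB; split_ifs with h0 he
            · exfalso; apply hne0; unfold piB; rw [if_pos h0]; exact h0.symm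
            · obtain ⟨i', rfl⟩ : ∃ i', i = i' + 1 := ⟨i - 1, by omega⟩
              simp only [Nat.add_sub_cancel]
              have he' : ¬ Even i' := Nat.even_add_one.mp he
              have hi'K : i' < K := by omega
              have hne : f (p i') ≠ p i' := by rw [← fstep i' he']; exact hKmin i' hi'K
              have := (hf.2 (p i') hne).symm
              rwa [← fstep i' he'] at this
            · have hiK : i < K := by have := Nat.not_even_iff.mp he; omega
              have hne : f (p i) ≠ p i := by rw [← fstep i he]; exact hKmin i hiK
              have := hf.2 (p i) hne
              rwa [← fstep i he] at this
          have hclB : ∀ i, i ≤ K → ∃ j, j ≤ K ∧ g (p i) = p j := by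
            intro i hi
            rcases Nat.eq_zero_or_pos i with rfl | h1
            · exact ⟨1, hK1, by rw [hp0]; exact hp1.symm⟩
            by_cases he : Even i
            · rcases eq_or_lt_of_le hi with heq | hiK
              · rw [heq]; exact ⟨K, le_refl _, hgz⟩
              · exact ⟨i+1, by omega, (gstep i he).symm⟩
            · obtain ⟨i', rfl⟩ : ∃ i', i = i' + 1 := ⟨i - 1, by omega⟩
              exact ⟨i', by omega, garr i' (not_not.mp (fun h => he (Nat.even_add_one.mpr h)))⟩
          obtain ⟨g', hg', hval, hoff⟩ := swap_generic hg K p pinj piB hπK hππ hadjB hclB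
          have hπne : ∀ i, i ≤ K → i ≠ 0 → piB i ≠ i := by
            intro i _ h0; unfold piB; split_ifs with h0' he
            · exact absurd h0' h0
            · have := Nat.even_iff.mp he; omega
            · omega
          have hgu' : g' u = u := by
            have := hval 0 (by omega)
            rw [hp0] at this
            rw [this]; unfold piB; rw [if_pos rfl, hp0]
          have hKne0 : p K ≠ u := fun hc => by
            have := pinj K 0 (le_refl _) (by omega) (by rw [hp0, hc])
            omega
          have hsupp' : msupp g' = insert (p K) ((msupp g).erase u) := by
            ext x
            by_cases hx : ∃ i, i ≤ K ∧ p i = x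
            · obtain ⟨i, hi, rfl⟩ := hx
              rcases Nat.eq_zero_or_pos i with rfl | h1
              · rw [hp0]
                simp only [mem_msupp, hgu', ne_eq, not_true_eq_false, false_iff,
                  Finset.mem_insert]
                push_neg
                exact ⟨fun hc => hKne0 hc.symm, fun hc =>
                  absurd rfl (Finset.mem_erase.1 hc).1⟩
              · have hmem : p i ∈ msupp g' := mem_msupp.2 (by
                  rw [hval i hi]
                  intro hc
                  exact hπne i hi (by omega) (pinj _ _ (hπK i hi) hi hc))
                simp only [hmem, true_iff, Finset.mem_insert]
                rcases eq_or_lt_of_le hi with heq | hiK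
                · left; rw [heq]
                · right
                  refine Finset.mem_erase.2 ⟨?_, mem_msupp.2 ?_⟩
                  · rw [← hp0]
                    intro hc
                    have := pinj i 0 hi (by omega) hc
                    omega
                  · by_cases he : Even i
                    · exact gsupp i hi (Or.inr ⟨he, h1, hiK⟩)
                    · exact gsupp i hi (Or.inl he)
            · push_neg at hx
              have hxo : ∀ i, i ≤ K → x ≠ p i := fun i hi h => hx i hi h.symm
              simp only [mem_msupp, Finset.mem_insert, hoff x hxo, Finset.mem_erase]
              have h1 : x ≠ u := by rw [← hp0]; exact hxo 0 (by omega)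
              have h2 : x ≠ p K := hxo K (le_refl _)
              simp [h1, h2]
          have husupp : u ∈ msupp g := mem_msupp.2 hgu
          have hcard : (msupp g').card = (msupp g).card := by
            rw [hsupp', Finset.card_insert_of_notMem (fun hc =>
              absurd (mem_msupp.1 (Finset.mem_of_mem_erase hc)) (not_not.2 hgz)),
              Finset.card_erase_of_mem husupp]
            have : 1 ≤ (msupp g).card := Finset.card_pos.2 ⟨u, husupp⟩
            omega
          have hgw' : g' w = w := by
            have hwoff : ∀ i, i ≤ K → w ≠ p i := by
              intro i hi hc
              rcases Nat.eq_zero_or_pos i with rfl | h1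
              · exact huw (by rw [hc, hp0])
              rcases eq_or_lt_of_le hi with heq | hiK
              · rw [heq] at hc; exact hzw hc.symm
              · have : g (p i) ≠ p i := by
                  by_cases he : Even i
                  · exact gsupp i hi (Or.inr ⟨he, h1, hiK⟩)
                  · exact gsupp i hi (Or.inl he)
                exact this (by rw [← hc, hgw])
            rw [hoff w hwoff]; exact hgw
          exact augment hg' (by rw [hcard]; exact hgmax) hgu' hgw' huw hadjuw
      · -- K odd : augmenting path for f, contradiction
        have hfz : f (p K) = p K := by
          have := hstall; rwa [if_neg (Nat.not_even_iff_odd.mpr hKodd)] at this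
        have hK2 : K % 2 = 1 := Nat.odd_iff.mp hKodd
        have hπK : ∀ i, i ≤ K → piA i ≤ K := by
          intro i hi; unfold piA; split_ifs with he
          · have := Nat.even_iff.mp he; omega
          · omega
        have hππ : ∀ i, i ≤ K → piA (piA i) = i := by
          intro i _; unfold piA; split_ifs with he h2 h3
          · rw [Nat.even_add_one] at h2; exact absurd he h2
          · omega
          · have := Nat.not_even_iff.mp he; omega
          · have := Nat.not_even_iff.mp he; have := Nat.not_even_iff.mp h3; omega
        have hadjA : ∀ i, i ≤ K → piA i ≠ i → G.Adj (p i) (p (piA i)) := by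
          intro i hi _
          unfold piA; split_ifs with he
          · have hiK : i < K := by have := Nat.even_iff.mp he; omega
            have hne : g (p i) ≠ p i := by rw [← gstep i he]; exact hKmin i hiK
            have := hg.2 (p i) hne
            rwa [← gstep i he] at this
          · obtain ⟨i', rfl⟩ : ∃ i', i = i' + 1 :=
              ⟨i - 1, by have := Nat.not_even_iff.mp he; omega⟩
            simp only [Nat.add_sub_cancel]
            have he' : Even i' := not_not.mp (fun h => he (Nat.even_add_one.mpr h))
            have hi'K : i' < K := by omega
            have hne : g (p i') ≠ p i' := by rw [← gstep i' he']; exact hKmin i' hi'K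
            have := (hg.2 (p i') hne).symm
            rwa [← gstep i' he'] at this
        have hclA : ∀ i, i ≤ K → ∃ j, j ≤ K ∧ f (p i) = p j := by
          intro i hi
          rcases Nat.eq_zero_or_pos i with rfl | h1
          · exact ⟨0, by omega, by rw [hp0, hu]⟩
          by_cases he : Even i
          · obtain ⟨i', rfl⟩ : ∃ i', i = i' + 1 := ⟨i - 1, by omega⟩
            exact ⟨i', by omega, farr i' (Nat.even_add_one.mp he)⟩
          · rcases eq_or_lt_of_le hi with heq | hiK
            · rw [heq]; exact ⟨K, le_refl _, hfz⟩
            · exact ⟨i+1, by omega, (fstep i he).symm⟩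
        obtain ⟨f', hf', hval, hoff⟩ := swap_generic hf K p pinj piA hπK hππ hadjA hclA
        have hπne : ∀ i, i ≤ K → piA i ≠ i := by
          intro i _; unfold piA; split_ifs with he
          · omega
          · have := Nat.not_even_iff.mp he; omega
        have hsupp' : msupp f' = insert u (insert (p K) (msupp f)) := by
          ext x
          by_cases hx : ∃ i, i ≤ K ∧ p i = x
          · obtain ⟨i, hi, rfl⟩ := hx
            have hmem : p i ∈ msupp f' := mem_msupp.2 (by
              rw [hval i hi]
              intro hc
              exact hπne i hi (pinj _ _ (hπK i hi) hi hc))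
            simp only [hmem, true_iff, Finset.mem_insert, mem_msupp]
            rcases Nat.eq_zero_or_pos i with rfl | h1
            · left; exact hp0
            rcases eq_or_lt_of_le hi with heq | hiK
            · right; left; rw [heq]
            · right; right; exact fsupp i h1 hi (Or.inr hiK)
          · push_neg at hx
            have hxo : ∀ i, i ≤ K → x ≠ p i := fun i hi h => hx i hi h.symm
            simp only [mem_msupp, Finset.mem_insert, hoff x hxo]
            have h1 : x ≠ u := by rw [← hp0]; exact hxo 0 (by omega)
            have h2 : x ≠ p K := hxo K (le_refl _)
            simp [h1, h2]
        have hucard : u ∉ insert (p K) (msupp f) := by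
          simp only [Finset.mem_insert, mem_msupp, hu, ne_eq, not_true_eq_false, or_false]
          intro hc
          have := pinj 0 K (by omega) (le_refl _) (by rw [hp0, hc])
          omega
        have hcard : (msupp f').card = (msupp f).card + 2 := by
          rw [hsupp', Finset.card_insert_of_notMem hucard,
            Finset.card_insert_of_notMem (by simp [mem_msupp, hfz])]
        have := le_nu2 hf'
        omega

end Gallai

section Count

lemma arith {s a d x : ℕ} (h1 : s ≤ a + 1) (h2 : x ≤ s * d) (h3 : x ≤ s * (s - 1)) :
    x ≤ (d + 1) * a := by
  rcases le_or_gt s a with h | h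
  · calc x ≤ s * d := h2
      _ ≤ a * (d+1) := Nat.mul_le_mul h (by omega)
      _ = (d+1) * a := Nat.mul_comm _ _
  · have hs : s = a + 1 := by omega
    subst hs
    rcases le_or_gt d a with h' | h'
    · calc x ≤ (a+1) * d := h2
        _ = a * d + d := by ring
        _ ≤ a * d + a := by omega
        _ = (d+1) * a := by ring
    · calc x ≤ (a+1) * (a + 1 - 1) := h3
        _ = (a+1) * a := by rw [Nat.add_sub_cancel]
        _ ≤ (d+1) * a := Nat.mul_le_mul (by omega) (le_refl _)

lemma counting {G : SimpleGraph V} [DecidableRel G.Adj] {f : V → V} {d : ℕ} (hf : IsMF G f)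
    (hd : ∀ v, G.degree v ≤ d)
    (hsep : ∀ u v, f u = u → f v = v → u ≠ v → ¬ G.Reachable u v) :
    2 * G.edgeFinset.card ≤ (d + 1) * (msupp f).card := by
  classical
  letI : Fintype G.ConnectedComponent := Fintype.ofFinite _
  rw [← SimpleGraph.sum_degrees_eq_twice_card_edges]
  have hfib : ∑ v, G.degree v = ∑ c : G.ConnectedComponent,
      ∑ v ∈ Finset.univ.filter (fun v => G.connectedComponentMk v = c), G.degree v :=
    (Finset.sum_fiberwise _ _ _).symm
  have hcard : (msupp f).card = ∑ c : G.ConnectedComponent,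
      ((msupp f).filter (fun v => G.connectedComponentMk v = c)).card :=
    Finset.card_eq_sum_card_fiberwise (fun x _ => Finset.mem_univ _)
  rw [hfib, hcard, Finset.mul_sum]
  refine Finset.sum_le_sum ?_
  intro c _
  set S := Finset.univ.filter (fun v => G.connectedComponentMk v = c) with hS
  set A := (msupp f).filter (fun v => G.connectedComponentMk v = c) with hA
  -- each vertex of S has all its neighbours in S
  have hnbr : ∀ v ∈ S, G.neighborFinset v ⊆ S.erase v := by
    intro v hv x hx
    rw [SimpleGraph.mem_neighborFinset] at hx
    refine Finset.mem_erase.2 ⟨fun hc => G.irrefl (hc ▸ hx), ?_⟩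
    rw [hS, Finset.mem_filter]
    refine ⟨Finset.mem_univ _, ?_⟩
    rw [hS, Finset.mem_filter] at hv
    rw [← hv.2]
    exact (SimpleGraph.ConnectedComponent.sound hx.symm.reachable)
  have hdeg1 : ∀ v ∈ S, G.degree v ≤ S.card - 1 := by
    intro v hv
    have := Finset.card_le_card (hnbr v hv)
    rwa [SimpleGraph.card_neighborFinset_eq_degree, Finset.card_erase_of_mem hv] at this
  -- at most one unmatched vertex in S
  have hone : (S.filter (fun v => v ∉ msupp f)).card ≤ 1 := by
    rw [Finset.card_le_one]
    intro a ha b hb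
    simp only [Finset.mem_filter, mem_msupp, not_not, hS] at ha hb
    by_contra hab
    refine hsep a b ha.2 hb.2 hab ?_
    exact (SimpleGraph.ConnectedComponent.exact (ha.1.2.trans hb.1.2.symm))
  have hSA : S.filter (fun v => v ∈ msupp f) = A := by
    rw [hS, hA]
    ext x
    simp only [Finset.mem_filter, Finset.mem_univ, true_and]
    tauto
  have hScard : S.card ≤ A.card + 1 := by
    have := Finset.card_filter_add_card_filter_not
      (s := S) (p := fun v => v ∈ msupp f)
    rw [hSA] at this
    omega
  refine arith hScard ?_ ?_
  · calc ∑ v ∈ S, G.degree v ≤ ∑ _v ∈ S, d := Finset.sum_le_sum (fun v _ => hd v)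
      _ = S.card * d := by rw [Finset.sum_const, smul_eq_mul]
  · calc ∑ v ∈ S, G.degree v ≤ ∑ _v ∈ S, (S.card - 1) :=
        Finset.sum_le_sum (fun v hv => hdeg1 v hv)
      _ = S.card * (S.card - 1) := by rw [Finset.sum_const, smul_eq_mul]

theorem main_bound : ∀ (N : ℕ) (G : SimpleGraph V) [DecidableRel G.Adj] (d : ℕ),
    (∀ v, G.degree v ≤ d) → nu2 G ≤ N → 2 * G.edgeFinset.card ≤ (d + 1) * nu2 G := by
  intro N
  induction N using Nat.strong_induction_on with
  | _ N ih =>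
    intro G inst d hd hN
    by_cases hall : ∀ w : V, ∃ f, IsMF G f ∧ (msupp f).card = nu2 G ∧ f w = w
    · obtain ⟨f, hf, hmax⟩ := exists_max G
      have hsep : ∀ u v, f u = u → f v = v → u ≠ v → ¬ G.Reachable u v := by
        intro u v hu hv huv hr
        exact gallai G hall (G.dist u v) f u v hf hmax hu hv huv hr (le_refl _)
      calc 2 * G.edgeFinset.card ≤ (d+1) * (msupp f).card := counting hf hd hsep
        _ = (d+1) * nu2 G := by rw [hmax]
    · push_neg at hall
      obtain ⟨w, hw⟩ := hall
      set G' := G.deleteEdges {e : Sym2 V | w ∈ e} with hG'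
      letI : DecidableRel G'.Adj := Classical.decRel _
      have hle : G' ≤ G := SimpleGraph.deleteEdges_le _
      have hG'adj : ∀ a b, G'.Adj a b ↔ (G.Adj a b ∧ a ≠ w ∧ b ≠ w) := by
        intro a b
        rw [hG', SimpleGraph.deleteEdges_adj]
        simp only [Set.mem_setOf_eq, Sym2.mem_iff]
        constructor
        · rintro ⟨h1, h2⟩
          push_neg at h2
          exact ⟨h1, fun hc => h2.1 hc.symm, fun hc => h2.2 hc.symm⟩
        · rintro ⟨h1, h2, h3⟩
          exact ⟨h1, by push_neg; exact ⟨fun hc => h2 hc.symm, fun hc => h3 hc.symm⟩⟩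
      have hG'f : ∀ h, IsMF G' h → IsMF G h ∧ h w = w := by
        intro h hh
        constructor
        · exact ⟨hh.1, fun v hv => hle (hh.2 v hv)⟩
        · by_contra hc
          have h2 := hh.2 w hc
          rw [hG'adj] at h2
          exact h2.2.1 rfl
      obtain ⟨f', hf', hmax'⟩ := exists_max G'
      have hf'G := hG'f f' hf'
      have hne : (msupp f').card ≠ nu2 G := fun heq => hw f' hf'G.1 heq hf'G.2
      have h1 := le_nu2 hf'G.1
      obtain ⟨a2, ha2⟩ := nu2_even G
      obtain ⟨a3, ha3⟩ := nu2_even G'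
      have hstep : nu2 G' + 2 ≤ nu2 G := by omega
      have hd' : ∀ v, G'.degree v ≤ d := by
        intro v
        have hsub : G'.neighborFinset v ⊆ G.neighborFinset v := by
          intro x hx
          rw [SimpleGraph.mem_neighborFinset] at hx ⊢
          exact hle hx
        exact le_trans (Finset.card_le_card hsub) (hd v)
      have hIH := ih (nu2 G') (by omega) G' d hd' (le_refl _)
      have hedge : G.edgeFinset.card ≤ G'.edgeFinset.card + d := by
        have hsub : G.edgeFinset ⊆ G'.edgeFinset ∪ G.incidenceFinset w := by
          intro e he
          rw [SimpleGraph.mem_edgeFinset] at he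
          by_cases hwe : w ∈ e
          · refine Finset.mem_union_right _ ?_
            rw [SimpleGraph.mem_incidenceFinset]
            exact ⟨he, hwe⟩
          · refine Finset.mem_union_left _ ?_
            rw [SimpleGraph.mem_edgeFinset, hG', SimpleGraph.edgeSet_deleteEdges]
            exact ⟨he, hwe⟩
        calc G.edgeFinset.card ≤ (G'.edgeFinset ∪ G.incidenceFinset w).card :=
            Finset.card_le_card hsub
          _ ≤ G'.edgeFinset.card + (G.incidenceFinset w).card := Finset.card_union_le _ _
          _ ≤ G'.edgeFinset.card + d := by
              rw [SimpleGraph.card_incidenceFinset_eq_degree]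
              exact Nat.add_le_add_left (hd w) _
      calc 2 * G.edgeFinset.card ≤ 2 * G'.edgeFinset.card + 2*d := by omega
        _ ≤ (d+1) * nu2 G' + 2*d := by omega
        _ ≤ (d+1) * (nu2 G' + 2) := by ring_nf; omega
        _ ≤ (d+1) * nu2 G := Nat.mul_le_mul_left _ hstep

end Count
end AHS

namespace AHS
section Bridge
variable {V : Type*} [Fintype V] [DecidableEq V]

lemma star_degree {G : SimpleGraph V} [DecidableRel G.Adj] {t : ℕ}
    (h : CopyIn (_root_.starGraph t) G) : ∃ v, t ≤ G.degree v := by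
  obtain ⟨F, hF⟩ := h
  refine ⟨F (Sum.inl 0), ?_⟩
  have hsub : (Finset.univ.image (fun j : Fin t => F (Sum.inr j))) ⊆
      G.neighborFinset (F (Sum.inl 0)) := by
    intro x hx
    obtain ⟨j, _, rfl⟩ := Finset.mem_image.1 hx
    rw [SimpleGraph.mem_neighborFinset]
    exact hF _ _ (by simp [_root_.starGraph])
  have hcard : (Finset.univ.image (fun j : Fin t => F (Sum.inr j))).card = t := by
    rw [Finset.card_image_of_injective _
      (fun a b hab => Sum.inr_injective (F.injective hab)),
      Finset.card_univ, Fintype.card_fin]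
  have := Finset.card_le_card hsub
  rwa [hcard, SimpleGraph.card_neighborFinset_eq_degree] at this

lemma degree_star {G : SimpleGraph V} [DecidableRel G.Adj] {t : ℕ} {v : V}
    (h : t ≤ G.degree v) : CopyIn (_root_.starGraph t) G := by
  have hle : Fintype.card (Fin t) ≤ Fintype.card (G.neighborFinset v) := by
    rw [Fintype.card_fin, Fintype.card_coe, SimpleGraph.card_neighborFinset_eq_degree]
    exact h
  obtain ⟨φ⟩ := Function.Embedding.nonempty_iff_card_le.2 hle
  have hmem : ∀ j, G.Adj v (φ j : V) := by
    intro j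
    have := (φ j).2
    rwa [SimpleGraph.mem_neighborFinset] at this
  refine ⟨⟨Sum.elim (fun _ => v) (fun j => (φ j : V)), ?_⟩, ?_⟩
  · rintro (a | a) (b | b) hab
    · simp [Subsingleton.elim a b]
    · exfalso
      have hv : v = (φ b : V) := by simpa using hab
      have := hmem b
      rw [← hv] at this
      exact G.irrefl this
    · exfalso
      have hv : (φ a : V) = v := by simpa using hab
      have := hmem a
      rw [hv] at this
      exact G.irrefl this
    · have : φ a = φ b := Subtype.ext (by simpa using hab)
      rw [φ.injective this]
  · intro a b hab
    rcases a with a | a <;> rcases b with b | b <;>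
      simp only [_root_.starGraph, completeBipartiteGraph] at hab
    · simp at hab
    · exact hmem b
    · exact (hmem a).symm
    · simp at hab

lemma extract {G : SimpleGraph V} {f : V → V} (hf : IsMF G f) :
    ∀ (k : ℕ) (s : Finset V), (∀ x ∈ s, f x ≠ x ∧ f x ∈ s) → 2 * k ≤ s.card →
    ∃ g : Fin k → V, (∀ i, g i ∈ s) ∧ (∀ i j, i ≠ j → g i ≠ g j ∧ g i ≠ f (g j)) ∧
      (∀ i, f (g i) ≠ g i) := by
  intro k
  induction k with
  | zero =>
    intro s _ _
    exact ⟨fun i => i.elim0, fun i => i.elim0, fun i => i.elim0, fun i => i.elim0⟩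
  | succ k ihk =>
    intro s hs hcard
    obtain ⟨x, hx⟩ := Finset.card_pos.1 (by omega : 0 < s.card)
    have hfx := hs x hx
    set s' := (s.erase x).erase (f x) with hs'
    have hs'mem : ∀ y ∈ s', y ∈ s ∧ y ≠ x ∧ y ≠ f x := by
      intro y hy
      exact ⟨Finset.mem_of_mem_erase (Finset.mem_of_mem_erase hy),
        Finset.ne_of_mem_erase (Finset.mem_of_mem_erase hy), Finset.ne_of_mem_erase hy⟩
    have hs'sub : ∀ y ∈ s', f y ≠ y ∧ f y ∈ s' := by
      intro y hy
      obtain ⟨hys, hy2, hy1⟩ := hs'mem y hy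
      refine ⟨(hs y hys).1, ?_⟩
      refine Finset.mem_erase.2 ⟨?_, Finset.mem_erase.2 ⟨?_, (hs y hys).2⟩⟩
      · intro h; exact hy2 (hf.1.injective h)
      · intro h; exact hy1 (by rw [← h, hf.1])
    have hcard' : 2 * k ≤ s'.card := by
      rw [hs', Finset.card_erase_of_mem (Finset.mem_erase.2 ⟨hfx.1, hfx.2⟩),
        Finset.card_erase_of_mem hx]
      omega
    obtain ⟨g, hg1, hg2, hg3⟩ := ihk s' hs'sub hcard'
    refine ⟨fun i => Fin.cases x (fun j => g j) i, ?_, ?_, ?_⟩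
    · intro i
      rcases Fin.eq_zero_or_eq_succ i with rfl | ⟨i', rfl⟩
      · simpa using hx
      · simpa using (hs'mem _ (hg1 i')).1
    · intro i j hij
      rcases Fin.eq_zero_or_eq_succ i with rfl | ⟨i', rfl⟩ <;>
        rcases Fin.eq_zero_or_eq_succ j with rfl | ⟨j', rfl⟩
      · exact absurd rfl hij
      · simp only [Fin.cases_zero, Fin.cases_succ]
        constructor
        · exact fun h => (hs'mem _ (hg1 j')).2.1 h.symm
        · intro h
          have hfg : f (g j') ∈ s' := (hs'sub _ (hg1 j')).2
          exact (hs'mem _ hfg).2.1 h.symm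
      · simp only [Fin.cases_zero, Fin.cases_succ]
        constructor
        · exact (hs'mem _ (hg1 i')).2.1
        · exact (hs'mem _ (hg1 i')).2.2
      · simp only [Fin.cases_succ]
        exact hg2 i' j' (fun h => hij (by rw [h]))
    · intro i
      rcases Fin.eq_zero_or_eq_succ i with rfl | ⟨i', rfl⟩
      · simpa using hfx.1
      · simpa using hg3 i' 

lemma matching_copy {G : SimpleGraph V} {f : V → V} (hf : IsMF G f) {t : ℕ}
    (h : 2 * t ≤ (msupp f).card) : CopyIn (matchingGraph t) G := by
  have hcl : ∀ x ∈ msupp f, f x ≠ x ∧ f x ∈ msupp f := by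
    intro x hx
    rw [mem_msupp] at hx
    refine ⟨hx, mem_msupp.2 ?_⟩
    rw [hf.1 x]
    exact fun hc => hx (by conv_lhs => rw [hc, hf.1])
  obtain ⟨g, hg1, hg2, hg3⟩ := extract hf t (msupp f) hcl h
  refine ⟨⟨fun p => if p.2 = 0 then g p.1 else f (g p.1), ?_⟩, ?_⟩
  · rintro ⟨a, x⟩ ⟨b, y⟩ hab
    simp only at hab
    by_cases hx : x = 0 <;> by_cases hy : y = 0
    · rw [if_pos hx, if_pos hy] at hab
      have : a = b := by
        by_contra hne
        exact (hg2 a b hne).1 hab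
      rw [this, hx, hy]
    · rw [if_pos hx, if_neg hy] at hab
      exfalso
      by_cases hne : a = b
      · rw [hne] at hab; exact hg3 b hab.symm
      · exact (hg2 a b hne).2 hab
    · rw [if_neg hx, if_pos hy] at hab
      exfalso
      by_cases hne : a = b
      · rw [hne] at hab; exact hg3 b hab
      · exact (hg2 b a (fun hc => hne hc.symm)).2 hab.symm
    · rw [if_neg hx, if_neg hy] at hab
      have hone : a = b := by
        by_contra hne
        exact (hg2 a b hne).1 (hf.1.injective hab)
      have : x = y := by omega
      rw [hone, this]
  · rintro ⟨a, x⟩ ⟨b, y⟩ hab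
    rw [matchingGraph, SimpleGraph.fromRel_adj] at hab
    obtain ⟨hne, hr⟩ := hab
    have hab' : a = b := by
      rcases hr with h | h
      · exact h
      · exact h.symm
    subst hab'
    have hxy : x ≠ y := fun hc => hne (by rw [hc])
    show G.Adj (if x = 0 then g a else f (g a)) (if y = 0 then g a else f (g a))
    by_cases hx : x = 0
    · rw [if_pos hx, if_neg (by omega : ¬ y = 0)]
      exact hf.2 (g a) (hg3 a)
    · rw [if_neg hx, if_pos (by omega : y = 0)]
      exact (hf.2 (g a) (hg3 a)).symm

lemma upper {t : ℕ} (ht : 1 ≤ t) (G : SimpleGraph V) [DecidableRel G.Adj]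
    (hm : ¬ CopyIn (matchingGraph t) G) (hs : ¬ CopyIn (_root_.starGraph t) G) :
    G.edgeFinset.card ≤ t ^ 2 - t := by
  have hd : ∀ v, G.degree v ≤ t - 1 := by
    intro v
    by_contra h
    push_neg at h
    exact hs (degree_star (by omega : t ≤ G.degree v))
  have hnu : nu2 G ≤ 2 * t - 2 := by
    obtain ⟨f, hf, hmax⟩ := exists_max G
    have h1 : ¬ (2 * t ≤ (msupp f).card) := fun h => hm (matching_copy hf h)
    obtain ⟨a, ha⟩ := msupp_even hf
    omega
  have hb := main_bound (nu2 G) G (t - 1) hd (le_refl _)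
  rw [(by omega : t - 1 + 1 = t)] at hb
  have h3 : t * nu2 G ≤ t * (2 * t - 2) := Nat.mul_le_mul_left _ hnu
  obtain ⟨u, rfl⟩ : ∃ u, t = u + 1 := ⟨t - 1, by omega⟩
  have h4 : (u + 1) * (2 * (u + 1) - 2) = 2 * ((u + 1) ^ 2 - (u + 1)) := by
    have e1 : 2 * (u + 1) - 2 = 2 * u := by omega
    have e2 : (u + 1) ^ 2 = u * u + 2 * u + 1 := by ring
    have e3 : (u + 1) * (2 * u) = 2 * (u * u + u) := by ring
    rw [e1, e3, e2]
    omega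
  omega

end Bridge
end AHS

namespace AHS
section Constr
variable {t m : ℕ}

lemma copyIn_of_iso {α W W' : Type*} {A : SimpleGraph α} {X : SimpleGraph W}
    {Y : SimpleGraph W'} (iso : X ≃g Y) (h : CopyIn A Y) : CopyIn A X := by
  obtain ⟨F, hF⟩ := h
  refine ⟨F.trans iso.symm.toEmbedding.toEmbedding, fun a b hab => ?_⟩
  have := iso.symm.map_adj_iff.mpr (hF a b hab)
  simpa using this

abbrev XG (t m : ℕ) : SimpleGraph ((Fin t ⊕ Fin t) ⊕ Fin m) :=
  (completeGraph (Fin t) ⊕g completeGraph (Fin t)) ⊕g (⊥ : SimpleGraph (Fin m))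

lemma XG_adj (x y : (Fin t ⊕ Fin t) ⊕ Fin m) : (XG t m).Adj x y ↔
    (∃ a b, x = Sum.inl (Sum.inl a) ∧ y = Sum.inl (Sum.inl b) ∧ a ≠ b) ∨
    (∃ a b, x = Sum.inl (Sum.inr a) ∧ y = Sum.inl (Sum.inr b) ∧ a ≠ b) := by
  rcases x with (a|a)|a <;> rcases y with (b|b)|b <;> simp [completeGraph]

lemma XG_facts (t m : ℕ) (ht : 1 ≤ t) (hodd : Odd t) :
    ¬ CopyIn (matchingGraph t) (XG t m) ∧ ¬ CopyIn (_root_.starGraph t) (XG t m) ∧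
    (XG t m).edgeSet.ncard = t ^ 2 - t := by
  classical
  -- degrees
  have h1 : ∀ a : Fin t, (XG t m).neighborFinset (Sum.inl (Sum.inl a)) =
      (Finset.univ.erase a).image (fun b => (Sum.inl (Sum.inl b) : (Fin t ⊕ Fin t) ⊕ Fin m)) := by
    intro a
    ext x
    rw [SimpleGraph.mem_neighborFinset, XG_adj]
    simp only [Finset.mem_image, Finset.mem_erase, Finset.mem_univ, and_true]
    constructor
    · rintro (⟨a', b, ha, hb, hne⟩ | ⟨a', b, ha, hb, hne⟩)
      · have haa : a = a' := by simpa using ha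
        exact ⟨b, ⟨fun hc => hne (by rw [← haa]; exact hc.symm), hb.symm⟩⟩
      · exact absurd ha (by simp)
    · rintro ⟨b, hb, rfl⟩
      exact Or.inl ⟨a, b, rfl, rfl, fun hc => hb (hc.symm)⟩
  have h2 : ∀ a : Fin t, (XG t m).neighborFinset (Sum.inl (Sum.inr a)) =
      (Finset.univ.erase a).image (fun b => (Sum.inl (Sum.inr b) : (Fin t ⊕ Fin t) ⊕ Fin m)) := by
    intro a
    ext x
    rw [SimpleGraph.mem_neighborFinset, XG_adj]
    simp only [Finset.mem_image, Finset.mem_erase, Finset.mem_univ, and_true]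
    constructor
    · rintro (⟨a', b, ha, hb, hne⟩ | ⟨a', b, ha, hb, hne⟩)
      · exact absurd ha (by simp)
      · have haa : a = a' := by simpa using ha
        exact ⟨b, ⟨fun hc => hne (by rw [← haa]; exact hc.symm), hb.symm⟩⟩
    · rintro ⟨b, hb, rfl⟩
      exact Or.inr ⟨a, b, rfl, rfl, fun hc => hb (hc.symm)⟩
  have hinj1 : Function.Injective
      (fun b : Fin t => (Sum.inl (Sum.inl b) : (Fin t ⊕ Fin t) ⊕ Fin m)) := by
    intro x y h; simpa using h
  have hinj2 : Function.Injective
      (fun b : Fin t => (Sum.inl (Sum.inr b) : (Fin t ⊕ Fin t) ⊕ Fin m)) := by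
    intro x y h; simpa using h
  have hda : ∀ a : Fin t, (XG t m).degree (Sum.inl (Sum.inl a)) = t - 1 := by
    intro a
    rw [← SimpleGraph.card_neighborFinset_eq_degree, h1,
      Finset.card_image_of_injective _ hinj1,
      Finset.card_erase_of_mem (Finset.mem_univ a), Finset.card_univ, Fintype.card_fin]
  have hdb : ∀ a : Fin t, (XG t m).degree (Sum.inl (Sum.inr a)) = t - 1 := by
    intro a
    rw [← SimpleGraph.card_neighborFinset_eq_degree, h2,
      Finset.card_image_of_injective _ hinj2,
      Finset.card_erase_of_mem (Finset.mem_univ a), Finset.card_univ, Fintype.card_fin]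
  have hdc : ∀ b : Fin m, (XG t m).degree (Sum.inr b) = 0 := by
    intro b
    rw [← SimpleGraph.card_neighborFinset_eq_degree, Finset.card_eq_zero]
    ext x
    rw [SimpleGraph.mem_neighborFinset, XG_adj]
    simp
  have hdall : ∀ v, (XG t m).degree v ≤ t - 1 := by
    rintro ((a|a)|b)
    · rw [hda]
    · rw [hdb]
    · rw [hdc]; omega
  refine ⟨?_, ?_, ?_⟩
  · -- no matching
    rintro ⟨F, hF⟩
    have hadj : ∀ i : Fin t, (XG t m).Adj (F (i, 0)) (F (i, 1)) := by
      intro i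
      refine hF _ _ ?_
      rw [matchingGraph, SimpleGraph.fromRel_adj]
      exact ⟨by simp, Or.inl rfl⟩
    set LL : Finset ((Fin t ⊕ Fin t) ⊕ Fin m) :=
      Finset.univ.image (fun a : Fin t => Sum.inl (Sum.inl a)) with hLL
    set LR : Finset ((Fin t ⊕ Fin t) ⊕ Fin m) :=
      Finset.univ.image (fun a : Fin t => Sum.inl (Sum.inr a)) with hLR
    have hLLcard : LL.card = t := by
      rw [hLL, Finset.card_image_of_injective _ hinj1, Finset.card_univ, Fintype.card_fin]
    have hLRcard : LR.card = t := by
      rw [hLR, Finset.card_image_of_injective _ hinj2, Finset.card_univ, Fintype.card_fin]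
    have hdisj : ∀ x, x ∈ LL → x ∈ LR → False := by
      intro x hx1 hx2
      rw [hLL, Finset.mem_image] at hx1
      rw [hLR, Finset.mem_image] at hx2
      obtain ⟨a, _, ha⟩ := hx1
      obtain ⟨b, _, hb⟩ := hx2
      rw [← ha] at hb
      simp at hb
    have hpair : ∀ i : Fin t, (F (i,0) ∈ LL ∧ F (i,1) ∈ LL) ∨
        (F (i,0) ∈ LR ∧ F (i,1) ∈ LR) := by
      intro i
      have h := hadj i
      rw [XG_adj] at h
      rcases h with ⟨a, b, hx, hy, _⟩ | ⟨a, b, hx, hy, _⟩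
      · exact Or.inl ⟨by rw [hx, hLL]; exact Finset.mem_image.2 ⟨a, Finset.mem_univ _, rfl⟩,
          by rw [hy, hLL]; exact Finset.mem_image.2 ⟨b, Finset.mem_univ _, rfl⟩⟩
      · exact Or.inr ⟨by rw [hx, hLR]; exact Finset.mem_image.2 ⟨a, Finset.mem_univ _, rfl⟩,
          by rw [hy, hLR]; exact Finset.mem_image.2 ⟨b, Finset.mem_univ _, rfl⟩⟩
    set A : Finset (Fin t) := Finset.univ.filter (fun i => F (i, 0) ∈ LL) with hA
    have hc1 : A.card * 2 ≤ t := by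
      have hmaps : ∀ p ∈ A ×ˢ (Finset.univ : Finset (Fin 2)), F p ∈ LL := by
        rintro ⟨i, j⟩ hp
        have hi : F (i, 0) ∈ LL := (Finset.mem_filter.1 (Finset.mem_product.1 hp).1).2
        rcases hpair i with ⟨ha, hb⟩ | ⟨ha, hb⟩
        · fin_cases j
          · exact ha
          · exact hb
        · exact absurd hi (fun hc => hdisj _ hc ha)
      have hinj : Set.InjOn F ↑(A ×ˢ (Finset.univ : Finset (Fin 2))) :=
        fun p _ q _ h => F.injective h
      have := Finset.card_le_card_of_injOn F hmaps hinj
      rwa [Finset.card_product, Finset.card_univ, Fintype.card_fin, hLLcard] at this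
    set B : Finset (Fin t) := Finset.univ.filter (fun i => ¬ (F (i, 0) ∈ LL)) with hB
    have hc2 : B.card * 2 ≤ t := by
      have hmaps : ∀ p ∈ B ×ˢ (Finset.univ : Finset (Fin 2)), F p ∈ LR := by
        rintro ⟨i, j⟩ hp
        have hi : ¬ (F (i, 0) ∈ LL) := (Finset.mem_filter.1 (Finset.mem_product.1 hp).1).2
        rcases hpair i with ⟨ha, hb⟩ | ⟨ha, hb⟩
        · exact absurd ha hi
        · fin_cases j
          · exact ha
          · exact hb
      have hinj : Set.InjOn F ↑(B ×ˢ (Finset.univ : Finset (Fin 2))) :=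
        fun p _ q _ h => F.injective h
      have := Finset.card_le_card_of_injOn F hmaps hinj
      rwa [Finset.card_product, Finset.card_univ, Fintype.card_fin, hLRcard] at this
    have hsplit : A.card + B.card = t := by
      rw [hA, hB]
      rw [Finset.card_filter_add_card_filter_not, Finset.card_univ, Fintype.card_fin]
    obtain ⟨u, hu⟩ := hodd
    omega
  · -- no star
    intro h
    obtain ⟨v, hv⟩ := star_degree h
    have := hdall v
    have hv' : t ≤ (XG t m).degree v := by convert hv
    omega
  · -- edge count
    have hsum := SimpleGraph.sum_degrees_eq_twice_card_edges (XG t m)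
    rw [Fintype.sum_sum_type, Fintype.sum_sum_type] at hsum
    replace hsum : ∑ a : Fin t, (XG t m).degree (Sum.inl (Sum.inl a)) +
        ∑ a : Fin t, (XG t m).degree (Sum.inl (Sum.inr a)) +
        ∑ a : Fin m, (XG t m).degree (Sum.inr a) = 2 * (XG t m).edgeFinset.card := by
      convert hsum
    simp only [hda, hdb, hdc, Finset.sum_const, Finset.card_univ, Fintype.card_fin,
      smul_eq_mul, Nat.mul_zero, Nat.add_zero, Nat.smul_one_eq_cast] at hsum
    rw [← SimpleGraph.coe_edgeFinset, Set.ncard_coe_finset]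
    obtain ⟨u, rfl⟩ : ∃ u, t = u + 1 := ⟨t - 1, by omega⟩
    have e2 : (u + 1) ^ 2 = u * u + 2 * u + 1 := by ring
    have e3 : (u + 1) * (u + 1 - 1) = u * u + u := by
      rw [Nat.add_sub_cancel]; ring
    rw [e3] at hsum
    omega

end Constr
end AHS

theorem abbott_hanson_sauer_odd (t n : ℕ) (ht : 1 ≤ t) (hodd : Odd t) (hn : 2 * t ≤ n) :
    exNum2 n (matchingGraph t) (_root_.starGraph t) = t ^ 2 - t ∧
    ¬ CopyIn (matchingGraph t)
      ((completeGraph (Fin t) ⊕g completeGraph (Fin t)) ⊕g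
        (⊥ : SimpleGraph (Fin (n - 2 * t)))) ∧
    ¬ CopyIn (_root_.starGraph t)
      ((completeGraph (Fin t) ⊕g completeGraph (Fin t)) ⊕g
        (⊥ : SimpleGraph (Fin (n - 2 * t)))) ∧
    ((completeGraph (Fin t) ⊕g completeGraph (Fin t)) ⊕g
        (⊥ : SimpleGraph (Fin (n - 2 * t)))).edgeSet.ncard = t ^ 2 - t := by
  classical
  obtain ⟨hM, hS, hE⟩ := AHS.XG_facts t (n - 2 * t) ht hodd
  refine ⟨?_, hM, hS, hE⟩
  have hcard : Fintype.card ((Fin t ⊕ Fin t) ⊕ Fin (n - 2 * t)) = Fintype.card (Fin n) := by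
    simp only [Fintype.card_sum, Fintype.card_fin]
    omega
  set e := Fintype.equivOfCardEq hcard with he
  set G0 : SimpleGraph (Fin n) := (AHS.XG t (n - 2 * t)).map e.toEmbedding with hG0
  have hiso : AHS.XG t (n - 2 * t) ≃g G0 := SimpleGraph.Iso.map e _
  have hM0 : ¬ CopyIn (matchingGraph t) G0 := fun h => hM (AHS.copyIn_of_iso hiso h)
  have hS0 : ¬ CopyIn (_root_.starGraph t) G0 := fun h => hS (AHS.copyIn_of_iso hiso h)
  have hE0 : G0.edgeSet.ncard = t ^ 2 - t := by
    rw [← hE, ← Nat.card_coe_set_eq, ← Nat.card_coe_set_eq]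
    exact (Nat.card_congr hiso.mapEdgeSet).symm
  have hmem : (t ^ 2 - t) ∈ {e | ∃ G : SimpleGraph (Fin n),
      ¬ CopyIn (matchingGraph t) G ∧ ¬ CopyIn (_root_.starGraph t) G ∧ e = G.edgeSet.ncard} :=
    ⟨G0, hM0, hS0, hE0.symm⟩
  have hub : ∀ x ∈ {e | ∃ G : SimpleGraph (Fin n), ¬ CopyIn (matchingGraph t) G ∧
      ¬ CopyIn (_root_.starGraph t) G ∧ e = G.edgeSet.ncard}, x ≤ t ^ 2 - t := by
    rintro x ⟨G, h1, h2, rfl⟩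
    letI : DecidableRel G.Adj := Classical.decRel _
    rw [← SimpleGraph.coe_edgeFinset, Set.ncard_coe_finset]
    exact AHS.upper ht G h1 h2
  rw [exNum2]
  exact le_antisymm (csSup_le ⟨_, hmem⟩ hub) (le_csSup ⟨t ^ 2 - t, hub⟩ hmem)
end
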